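/- A connected 4-uniform hypergraph H of order 8 has at least 15 pairs of vertices at distance 1 (adjacent pairs), and equality implies H has exactly 3 hyperedges. -/

import Mathlib

/-- The underlying graph of a hypergraph with edge set `E`: two distinct vertices
are adjacent iff they lie in a common hyperedge. -/
def hyperAdj {V : Type*} [DecidableEq V] (E : Finset (Finset V)) : SimpleGraph V where
  Adj u v := u ≠ v ∧ ∃ e ∈ E, u ∈ e ∧ v ∈ e
  symm := by
    constructor
    rintro u v ⟨h, e, he, hu, hv⟩
    exact ⟨h.symm, e, he, hv, hu⟩
  loopless := by
    constructor
    rintro u ⟨h, -⟩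
    exact h rfl

/-- Distance in the hypergraph, as a function on unordered pairs. -/
noncomputable def pairDist {V : Type*} [DecidableEq V] (E : Finset (Finset V)) : Sym2 V → ℕ :=
  Sym2.lift ⟨fun u v => (hyperAdj E).dist u v, fun u v => (hyperAdj E).dist_comm⟩

/-- The number of unordered pairs of distinct vertices at distance `i`. -/
noncomputable def nPairs {V : Type*} [DecidableEq V] [Fintype V] (E : Finset (Finset V)) (i : ℕ) : ℕ :=
  (Finset.univ.filter fun p : Sym2 V => ¬p.IsDiag ∧ pairDist E p = i).card

/-- The Wiener index: the sum of distances over unordered pairs of distinct vertices. -/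
noncomputable def wiener {V : Type*} [DecidableEq V] [Fintype V] (E : Finset (Finset V)) : ℕ :=
  ∑ p ∈ Finset.univ.filter fun p : Sym2 V => ¬p.IsDiag, pairDist E p

namespace Hyper15

open Finset SimpleGraph

variable {E : Finset (Finset (Fin 8))}

instance instDec (E : Finset (Finset (Fin 8))) : DecidableRel (hyperAdj E).Adj :=
  fun u v => inferInstanceAs (Decidable (u ≠ v ∧ ∃ e ∈ E, u ∈ e ∧ v ∈ e))

lemma adj_iff {u v : Fin 8} : (hyperAdj E).Adj u v ↔ u ≠ v ∧ ∃ e ∈ E, u ∈ e ∧ v ∈ e := Iff.rfl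

lemma nPairs_eq (E : Finset (Finset (Fin 8))) : nPairs E 1 = (hyperAdj E).edgeFinset.card := by
  unfold nPairs
  congr 1
  ext p
  rw [Finset.mem_filter]
  induction p using Sym2.ind with
  | _ u v =>
    simp only [mem_filter, mem_univ, true_and, mem_edgeFinset, mem_edgeSet,
      Sym2.isDiag_iff_proj_eq, pairDist, Sym2.lift_mk]
    constructor
    · rintro ⟨hne, hd⟩
      exact ((hyperAdj E).dist_eq_one_iff_adj).mp hd
    · intro h
      exact ⟨h.ne, ((hyperAdj E).dist_eq_one_iff_adj).mpr h⟩

lemma cross_of_walk {u v : Fin 8} (W : Finset (Fin 8)) (p : (hyperAdj E).Walk u v)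
    (hu : u ∈ W) (hv : v ∉ W) : ∃ x y, x ∈ W ∧ y ∉ W ∧ (hyperAdj E).Adj x y := by
  induction p with
  | nil => exact absurd hu hv
  | @cons a b c hadj q ih =>
    by_cases hb : b ∈ W
    · exact ih hb hv
    · exact ⟨a, b, hu, hb, hadj⟩

lemma cross_edge (hconn : (hyperAdj E).Connected) (W : Finset (Fin 8)) (hW : W.Nonempty)
    (hW' : ∃ v, v ∉ W) : ∃ x y, x ∈ W ∧ y ∉ W ∧ (hyperAdj E).Adj x y := by
  obtain ⟨u, hu⟩ := hW
  obtain ⟨v, hv⟩ := hW'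
  obtain ⟨p⟩ := hconn.preconnected u v
  exact cross_of_walk W p hu hv

lemma cover (hconn : (hyperAdj E).Connected) (v : Fin 8) : ∃ e ∈ E, v ∈ e := by
  obtain ⟨u, hu⟩ := exists_ne v
  obtain ⟨p⟩ := hconn.preconnected v u
  cases p with
  | nil => exact absurd rfl hu
  | cons h q => obtain ⟨-, e, he, h1, h2⟩ := h; exact ⟨e, he, h1⟩

lemma clique {e : Finset (Fin 8)} (he : e ∈ E) {u v : Fin 8} (hu : u ∈ e) (hv : v ∈ e)
    (hne : u ≠ v) : (hyperAdj E).Adj u v := ⟨hne, e, he, hu, hv⟩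

lemma mindeg (hunif : ∀ e ∈ E, e.card = 4) (hconn : (hyperAdj E).Connected) (v : Fin 8) :
    3 ≤ (hyperAdj E).degree v := by
  obtain ⟨e, he, hv⟩ := cover hconn v
  have hsub : e.erase v ⊆ (hyperAdj E).neighborFinset v := by
    intro u hu
    rw [mem_neighborFinset]
    exact clique he hv (mem_of_mem_erase hu) (Ne.symm (ne_of_mem_erase hu))
  calc 3 = (e.erase v).card := by rw [card_erase_of_mem hv, hunif e he]
    _ ≤ _ := card_le_card hsub

lemma unique_edge (hunif : ∀ e ∈ E, e.card = 4) (v : Fin 8)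
    (hdeg : (hyperAdj E).degree v = 3) {e : Finset (Fin 8)} (he : e ∈ E) (hv : v ∈ e) :
    e = insert v ((hyperAdj E).neighborFinset v) := by
  have hsub : e.erase v ⊆ (hyperAdj E).neighborFinset v := by
    intro u hu
    rw [mem_neighborFinset]
    exact clique he hv (mem_of_mem_erase hu) (Ne.symm (ne_of_mem_erase hu))
  have hcard : (e.erase v).card = ((hyperAdj E).neighborFinset v).card := by
    rw [card_erase_of_mem hv, hunif e he, ← SimpleGraph.degree, hdeg]
  have heq : e.erase v = (hyperAdj E).neighborFinset v := eq_of_subset_of_card_le hsub hcard.ge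
  rw [← heq, insert_erase hv]

lemma cardFilterProd (A B : Finset (Fin 8)) (r : Fin 8 → Fin 8 → Prop) [DecidableRel r] :
    ((A ×ˢ B).filter fun p => r p.1 p.2).card = ∑ a ∈ A, (B.filter (r a)).card := by
  rw [card_filter, Finset.sum_product]
  exact Finset.sum_congr rfl fun a _ => (card_filter _ _).symm

lemma transposeCard (A B : Finset (Fin 8)) :
    ((A ×ˢ B).filter fun p => (hyperAdj E).Adj p.1 p.2).card
      = ((B ×ˢ A).filter fun p => (hyperAdj E).Adj p.1 p.2).card := by
  apply card_bij (fun p _ => p.swap)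
  · rintro ⟨x, y⟩ hp
    simp only [mem_filter, mem_product] at *
    exact ⟨⟨hp.1.2, hp.1.1⟩, hp.2.symm⟩
  · rintro ⟨x, y⟩ _ ⟨z, w⟩ _ h
    simpa [Prod.ext_iff, and_comm] using h
  · rintro ⟨x, y⟩ hp
    refine ⟨(y, x), ?_, rfl⟩
    simp only [mem_filter, mem_product] at *
    exact ⟨⟨hp.1.2, hp.1.1⟩, hp.2.symm⟩

lemma sigma_even (S : Finset (Fin 8)) :
    ∃ i, ((S ×ˢ S).filter fun p => (hyperAdj E).Adj p.1 p.2).card = 2 * i := by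
  set X := (S ×ˢ S).filter fun p => (hyperAdj E).Adj p.1 p.2 with hX
  refine ⟨(X.filter fun p => p.1 < p.2).card, ?_⟩
  have h1 : (X.filter fun p => p.1 < p.2).card + (X.filter fun p => ¬ p.1 < p.2).card = X.card :=
    card_filter_add_card_filter_not _
  have h2 : (X.filter fun p => ¬ p.1 < p.2).card = (X.filter fun p => p.1 < p.2).card := by
    apply card_bij (fun p _ => p.swap)
    · rintro ⟨x, y⟩ hp
      simp only [hX, mem_filter, mem_product, not_lt] at *
      obtain ⟨⟨⟨hx, hy⟩, hadj⟩, hle⟩ := hp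
      exact ⟨⟨⟨hy, hx⟩, hadj.symm⟩, lt_of_le_of_ne hle hadj.ne.symm⟩
    · rintro ⟨x, y⟩ _ ⟨z, w⟩ _ h
      simpa [Prod.ext_iff, and_comm] using h
    · rintro ⟨x, y⟩ hp
      refine ⟨(y, x), ?_, rfl⟩
      simp only [hX, mem_filter, mem_product, not_lt] at *
      exact ⟨⟨⟨hp.1.1.2, hp.1.1.1⟩, hp.1.2.symm⟩, le_of_lt hp.2⟩
  omega


lemma neighborFinset_eq (v : Fin 8) :
    (hyperAdj E).neighborFinset v = Finset.univ.filter ((hyperAdj E).Adj v) := by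
  ext u; simp [SimpleGraph.mem_neighborFinset]

lemma degree_split (Q : Finset (Fin 8)) (v : Fin 8) :
    (hyperAdj E).degree v
      = (Q.filter ((hyperAdj E).Adj v)).card + (Qᶜ.filter ((hyperAdj E).Adj v)).card := by
  rw [← SimpleGraph.card_neighborFinset_eq_degree, neighborFinset_eq]
  rw [← Finset.union_compl Q, filter_union]
  exact card_union_of_disjoint (disjoint_filter_filter disjoint_compl_right)

lemma filterQ_eq_erase {Q : Finset (Fin 8)} (hQE : Q ∈ E) {v : Fin 8} (hv : v ∈ Q) :
    Q.filter ((hyperAdj E).Adj v) = Q.erase v := by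
  ext u
  simp only [mem_filter, mem_erase]
  constructor
  · rintro ⟨hu, hadj⟩; exact ⟨hadj.ne', hu⟩
  · rintro ⟨hne, hu⟩; exact ⟨hu, clique hQE hv hu (Ne.symm hne)⟩

/-- The handshake decomposition: `2 * |edges| = 12 + 2c + σ`. -/
lemma handshake {Q : Finset (Fin 8)} (hQE : Q ∈ E) (hQ4 : Q.card = 4) :
    2 * (hyperAdj E).edgeFinset.card
      = 12 + 2 * ((Q ×ˢ Qᶜ).filter fun p => (hyperAdj E).Adj p.1 p.2).card
          + ((Qᶜ ×ˢ Qᶜ).filter fun p => (hyperAdj E).Adj p.1 p.2).card := by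
  have hsum := (hyperAdj E).sum_degrees_eq_twice_card_edges
  have hsplit := Finset.sum_add_sum_compl Q (fun v => (hyperAdj E).degree v)
  have hQpart : ∑ v ∈ Q, (hyperAdj E).degree v
      = 12 + ((Q ×ˢ Qᶜ).filter fun p => (hyperAdj E).Adj p.1 p.2).card := by
    rw [cardFilterProd]
    have : ∀ v ∈ Q, (hyperAdj E).degree v = 3 + (Qᶜ.filter ((hyperAdj E).Adj v)).card := by
      intro v hv
      rw [degree_split Q v, filterQ_eq_erase hQE hv, card_erase_of_mem hv, hQ4]
    rw [Finset.sum_congr rfl this, Finset.sum_add_distrib, Finset.sum_const, hQ4]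
    simp
  have hSpart : ∑ v ∈ Qᶜ, (hyperAdj E).degree v
      = ((Q ×ˢ Qᶜ).filter fun p => (hyperAdj E).Adj p.1 p.2).card
        + ((Qᶜ ×ˢ Qᶜ).filter fun p => (hyperAdj E).Adj p.1 p.2).card := by
    rw [transposeCard Q Qᶜ, cardFilterProd, cardFilterProd]
    rw [← Finset.sum_add_distrib]
    exact Finset.sum_congr rfl fun v _ => (degree_split Q v)
  omega

lemma edge_decomp {R : Finset (Fin 8)} (Q : Finset (Fin 8)) :
    R = (R ∩ Q) ∪ (R ∩ Qᶜ) ∧ (R ∩ Q).card + (R ∩ Qᶜ).card = R.card := by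
  have h1 : R = (R ∩ Q) ∪ (R ∩ Qᶜ) := by
    ext v; simp only [mem_union, mem_inter, mem_compl]; tauto
  refine ⟨h1, ?_⟩
  rw [← card_union_of_disjoint, ← h1]
  exact Finset.disjoint_left.mpr (by intro x hx hx'; exact (mem_compl.mp (mem_inter.mp hx').2) (mem_inter.mp hx).2)

lemma cross_sub {Q R : Finset (Fin 8)} (hRE : R ∈ E) :
    ((R ∩ Q) ×ˢ (R ∩ Qᶜ)) ⊆ (Q ×ˢ Qᶜ).filter fun p => (hyperAdj E).Adj p.1 p.2 := by
  rintro ⟨x, y⟩ hp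
  simp only [mem_product, mem_inter, mem_compl] at hp
  simp only [mem_filter, mem_product, mem_compl]
  refine ⟨⟨hp.1.2, hp.2.2⟩, clique hRE hp.1.1 hp.2.1 ?_⟩
  rintro rfl; exact hp.2.2 hp.1.2

lemma prod_factors_eq {A B C D : Finset (Fin 8)} (h : A ×ˢ B = C ×ˢ D)
    (hA : A.Nonempty) (hB : B.Nonempty) : A = C ∧ B = D := by
  have key : ∀ x y : Fin 8, (x, y) ∈ A ×ˢ B ↔ (x, y) ∈ C ×ˢ D := fun x y => by rw [h]
  simp only [mem_product] at key
  obtain ⟨a, ha⟩ := hA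
  obtain ⟨b, hb⟩ := hB
  obtain ⟨haC, hbD⟩ := (key a b).mp ⟨ha, hb⟩
  constructor
  · ext x
    exact ⟨fun hx => ((key x b).mp ⟨hx, hb⟩).1, fun hx => ((key x b).mpr ⟨hx, hbD⟩).1⟩
  · ext y
    exact ⟨fun hy => ((key a y).mp ⟨ha, hy⟩).2, fun hy => ((key a y).mpr ⟨haC, hy⟩).2⟩


lemma prodz {x y : ℕ} (h : x + y = 4) (hx : 1 ≤ x) (hy : 1 ≤ y) : 3 ≤ x * y := by
  have hx4 : x ≤ 4 := by omega
  interval_cases x <;> omega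

set_option maxHeartbeats 2000000 in
/-- The main structural analysis around one hyperedge `Q`. -/
lemma analysis (hunif : ∀ e ∈ E, e.card = 4) (hconn : (hyperAdj E).Connected)
    {Q : Finset (Fin 8)} (hQE : Q ∈ E) :
    18 ≤ ((Qᶜ ×ˢ Qᶜ).filter fun p => (hyperAdj E).Adj p.1 p.2).card
         + 2 * ((Q ×ˢ Qᶜ).filter fun p => (hyperAdj E).Adj p.1 p.2).card
    ∧ (((Qᶜ ×ˢ Qᶜ).filter fun p => (hyperAdj E).Adj p.1 p.2).card
         + 2 * ((Q ×ˢ Qᶜ).filter fun p => (hyperAdj E).Adj p.1 p.2).card = 18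
       → ∃ A B C, ∀ e ∈ E, e = A ∨ e = B ∨ e = C) := by
  have hQ4 : Q.card = 4 := hunif Q hQE
  set S := Qᶜ with hSdef
  have hS4 : S.card = 4 := by
    rw [hSdef, card_compl, hQ4]; rfl
  set σ := ((S ×ˢ S).filter fun p => (hyperAdj E).Adj p.1 p.2).card with hσdef
  set c := ((Q ×ˢ S).filter fun p => (hyperAdj E).Adj p.1 p.2).card with hcdef
  clear_value S σ c
  -- basic facts
  have hsub_offDiag : ((S ×ˢ S).filter fun p => (hyperAdj E).Adj p.1 p.2) ⊆ S.offDiag := by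
    rintro ⟨x, y⟩ hp
    simp only [mem_filter, mem_product] at hp
    exact mem_offDiag.mpr ⟨hp.1.1, hp.1.2, hp.2.ne⟩
  have hoffcard : S.offDiag.card = 12 := by rw [offDiag_card, hS4]
  have hσ12 : σ ≤ 12 := by rw [hσdef, ← hoffcard]; exact card_le_card hsub_offDiag
  -- degree sum over S
  have hdegS : ∑ v ∈ S, (hyperAdj E).degree v = c + σ := by
    have h1 : ∀ v ∈ S, (hyperAdj E).degree v
        = (Q.filter ((hyperAdj E).Adj v)).card + (S.filter ((hyperAdj E).Adj v)).card :=
      fun v _ => by rw [hSdef]; exact degree_split Q v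
    rw [Finset.sum_congr rfl h1, Finset.sum_add_distrib, ← cardFilterProd, ← cardFilterProd,
      ← transposeCard Q S, ← hcdef, ← hσdef]
  have hdegSge : 12 ≤ ∑ v ∈ S, (hyperAdj E).degree v := by
    have := Finset.card_nsmul_le_sum S (fun v => (hyperAdj E).degree v) 3
      (fun v _ => mindeg hunif hconn v)
    rw [hS4] at this
    simp only [smul_eq_mul] at this
    omega
  have hσc12 : 12 ≤ c + σ := hdegS ▸ hdegSge
  have hQne : Q.Nonempty := card_pos.mp (by omega)
  have hSne : S.Nonempty := card_pos.mp (by omega)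
  -- helper to show e = Q when e does not meet S
  have heQ : ∀ e ∈ E, (e ∩ S) = ∅ → e = Q := by
    intro e he hes
    apply eq_of_subset_of_card_le _ (by rw [hQ4, hunif e he])
    intro v hv
    by_contra hvQ
    have : v ∈ e ∩ S := mem_inter.mpr ⟨hv, by rw [hSdef]; exact mem_compl.mpr hvQ⟩
    rw [hes] at this
    exact notMem_empty v this
  have heS : ∀ e ∈ E, (e ∩ Q) = ∅ → e = S := by
    intro e he heq
    apply eq_of_subset_of_card_le _ (by rw [hS4, hunif e he])
    intro v hv
    rw [hSdef, mem_compl]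
    intro hvQ
    have : v ∈ e ∩ Q := mem_inter.mpr ⟨hv, hvQ⟩
    rw [heq] at this
    exact notMem_empty v this
  by_cases hSc : ∀ p ∈ S.offDiag, (hyperAdj E).Adj p.1 p.2
  · -- S is a clique
    have hσ : σ = 12 := by
      rw [hσdef]
      rw [← hoffcard]
      congr 1
      apply Finset.Subset.antisymm hsub_offDiag
      intro p hp
      simp only [mem_filter]
      have hm := mem_offDiag.mp hp
      exact ⟨mem_product.mpr ⟨hm.1, hm.2.1⟩, hSc p hp⟩
    -- there is a crossing hyperedge
    obtain ⟨v0, hv0⟩ := hSne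
    have hv0' : v0 ∉ Q := by rw [hSdef] at hv0; exact mem_compl.mp hv0
    obtain ⟨x, y, hxQ, hyQ, hadj⟩ := cross_edge hconn Q hQne ⟨v0, hv0'⟩
    obtain ⟨hne, R0, hR0E, hxR, hyR⟩ := hadj
    have hyS : y ∈ S := by rw [hSdef]; exact mem_compl.mpr hyQ
    have hz : (R0 ∩ Q).card + (R0 ∩ S).card = 4 := by
      rw [hSdef, (edge_decomp Q).2, hunif R0 hR0E]
    have hz1 : 1 ≤ (R0 ∩ Q).card := card_pos.mpr ⟨x, mem_inter.mpr ⟨hxR, hxQ⟩⟩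
    have hz2 : 1 ≤ (R0 ∩ S).card := card_pos.mpr ⟨y, mem_inter.mpr ⟨hyR, hyS⟩⟩
    have hC0sub : ((R0 ∩ Q) ×ˢ (R0 ∩ S)) ⊆ (Q ×ˢ S).filter fun p => (hyperAdj E).Adj p.1 p.2 := by
      rw [hSdef]; exact cross_sub hR0E
    have hC0card : ((R0 ∩ Q) ×ˢ (R0 ∩ S)).card = (R0 ∩ Q).card * (R0 ∩ S).card := card_product _ _
    have hc3 : 3 ≤ c := by
      rw [hcdef]
      calc 3 ≤ (R0 ∩ Q).card * (R0 ∩ S).card := prodz hz hz1 hz2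
        _ = _ := hC0card.symm
        _ ≤ _ := card_le_card hC0sub
    refine ⟨by omega, ?_⟩
    intro heq
    have hc : c = 3 := by omega
    -- the cross set equals the cross pairs of R0
    have hX : ((R0 ∩ Q) ×ˢ (R0 ∩ S)) = (Q ×ˢ S).filter fun p => (hyperAdj E).Adj p.1 p.2 := by
      apply eq_of_subset_of_card_le hC0sub
      rw [← hcdef, hc, hC0card]
      exact prodz hz hz1 hz2
    refine ⟨Q, S, R0, fun e he => ?_⟩
    by_cases he2 : (e ∩ S) = ∅
    · exact Or.inl (heQ e he he2)
    by_cases he1 : (e ∩ Q) = ∅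
    · exact Or.inr (Or.inl (heS e he he1))
    right; right
    have hze : (e ∩ Q).card + (e ∩ S).card = 4 := by
      rw [hSdef, (edge_decomp Q).2, hunif e he]
    have hze1 : 1 ≤ (e ∩ Q).card := card_pos.mpr (nonempty_of_ne_empty he1)
    have hze2 : 1 ≤ (e ∩ S).card := card_pos.mpr (nonempty_of_ne_empty he2)
    have hCesub : ((e ∩ Q) ×ˢ (e ∩ S)) ⊆ (Q ×ˢ S).filter fun p => (hyperAdj E).Adj p.1 p.2 := by
      rw [hSdef]; exact cross_sub he
    have hCe : ((e ∩ Q) ×ˢ (e ∩ S)) = ((R0 ∩ Q) ×ˢ (R0 ∩ S)) := by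
      rw [hX]
      apply eq_of_subset_of_card_le hCesub
      rw [← hcdef, hc, card_product]
      exact prodz hze hze1 hze2
    obtain ⟨hq, hs⟩ := prod_factors_eq hCe (card_pos.mp hze1) (card_pos.mp hze2)
    rw [(edge_decomp (R := e) Q).1, (edge_decomp (R := R0) Q).1, ← hSdef, hq, hs]
  · -- S is not a clique
    push_neg at hSc
    obtain ⟨⟨s1, s2⟩, hpmem, hnadj⟩ := hSc
    obtain ⟨hs1S, hs2S, hs12⟩ := mem_offDiag.mp hpmem
    dsimp only at hs1S hs2S hs12 hnadj
    -- σ ≤ 10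
    have hσ10 : σ ≤ 10 := by
      have hsub : ((S ×ˢ S).filter fun p => (hyperAdj E).Adj p.1 p.2)
          ⊆ (S.offDiag.erase (s1, s2)).erase (s2, s1) := by
        intro p hp
        have hpo := hsub_offDiag hp
        have hadj := (mem_filter.mp hp).2
        rw [mem_erase, mem_erase]
        refine ⟨?_, ?_, hpo⟩
        · rintro rfl; exact hnadj hadj.symm
        · rintro rfl; exact hnadj hadj
      have h1 : (s1, s2) ∈ S.offDiag := hpmem
      have h2 : (s2, s1) ∈ S.offDiag.erase (s1, s2) := by
        rw [mem_erase]
        exact ⟨by simp [Prod.ext_iff]; rintro rfl; exact fun h => hs12 rfl,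
          mem_offDiag.mpr ⟨hs2S, hs1S, hs12.symm⟩⟩
      rw [hσdef]
      calc _ ≤ ((S.offDiag.erase (s1, s2)).erase (s2, s1)).card := card_le_card hsub
        _ = 10 := by rw [card_erase_of_mem h2, card_erase_of_mem h1, hoffcard]
    -- hyperedges through s1 and s2
    obtain ⟨R1, hR1E, hs1R1⟩ := cover hconn s1
    obtain ⟨R2, hR2E, hs2R2⟩ := cover hconn s2
    have hs2R1 : s2 ∉ R1 := fun h => hnadj (clique hR1E hs1R1 h hs12)
    have hs1R2 : s1 ∉ R2 := fun h => hnadj (clique hR2E h hs2R2 hs12)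
    have hz11 : 1 ≤ (R1 ∩ Q).card := by
      by_contra h
      push_neg at h
      have h0 : R1 ∩ Q = ∅ := card_eq_zero.mp (by omega)
      have := heS R1 hR1E h0
      exact hs2R1 (this ▸ hs2S)
    have hz21 : 1 ≤ (R2 ∩ Q).card := by
      by_contra h
      push_neg at h
      have h0 : R2 ∩ Q = ∅ := card_eq_zero.mp (by omega)
      have := heS R2 hR2E h0
      exact hs1R2 (this ▸ hs1S)
    have hz1sum : (R1 ∩ Q).card + (R1 ∩ S).card = 4 := by
      rw [hSdef, (edge_decomp Q).2, hunif R1 hR1E]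
    have hz2sum : (R2 ∩ Q).card + (R2 ∩ S).card = 4 := by
      rw [hSdef, (edge_decomp Q).2, hunif R2 hR2E]
    have hz12 : 1 ≤ (R1 ∩ S).card := card_pos.mpr ⟨s1, mem_inter.mpr ⟨hs1R1, hs1S⟩⟩
    have hz22 : 1 ≤ (R2 ∩ S).card := card_pos.mpr ⟨s2, mem_inter.mpr ⟨hs2R2, hs2S⟩⟩
    set TQ := R1 ∩ R2 ∩ Q with hTQdef
    set TS := R1 ∩ R2 ∩ S with hTSdef
    clear_value TQ TS
    have hT : TQ.card + TS.card = (R1 ∩ R2).card := by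
      rw [hTQdef, hTSdef, hSdef, (edge_decomp Q).2]
    have hR1R2 : R1 ≠ R2 := fun h => hs2R1 (h ▸ hs2R2)
    have hT3 : (R1 ∩ R2).card ≤ 3 := by
      by_contra h
      push_neg at h
      have h4 : (R1 ∩ R2).card = 4 := le_antisymm
        (le_trans (card_le_card (inter_subset_left)) (le_of_eq (hunif R1 hR1E))) h
      have : R1 ∩ R2 = R1 := eq_of_subset_of_card_le inter_subset_left
        (by rw [h4, hunif R1 hR1E])
      have hsub : R1 ⊆ R2 := by rw [← this]; exact inter_subset_right
      exact hR1R2 (eq_of_subset_of_card_le hsub (by rw [hunif R1 hR1E, hunif R2 hR2E]))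
    -- intersection of cross sets
    have hCC : ((R1 ∩ Q) ×ˢ (R1 ∩ S)) ∩ ((R2 ∩ Q) ×ˢ (R2 ∩ S)) = TQ ×ˢ TS := by
      ext ⟨x, y⟩
      simp only [hTQdef, hTSdef, mem_inter, mem_product]
      tauto
    have hC1sub : ((R1 ∩ Q) ×ˢ (R1 ∩ S)) ⊆ (Q ×ˢ S).filter fun p => (hyperAdj E).Adj p.1 p.2 := by
      rw [hSdef]; exact cross_sub hR1E
    have hC2sub : ((R2 ∩ Q) ×ˢ (R2 ∩ S)) ⊆ (Q ×ˢ S).filter fun p => (hyperAdj E).Adj p.1 p.2 := by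
      rw [hSdef]; exact cross_sub hR2E
    have hcup : (((R1 ∩ Q) ×ˢ (R1 ∩ S)) ∪ ((R2 ∩ Q) ×ˢ (R2 ∩ S))).card ≤ c := by
      rw [hcdef]
      exact card_le_card (union_subset hC1sub hC2sub)
    have hcards : (((R1 ∩ Q) ×ˢ (R1 ∩ S)) ∪ ((R2 ∩ Q) ×ˢ (R2 ∩ S))).card
        + TQ.card * TS.card
        = (R1 ∩ Q).card * (R1 ∩ S).card + (R2 ∩ Q).card * (R2 ∩ S).card := by
      rw [show TQ.card * TS.card = (TQ ×ˢ TS).card from (card_product _ _).symm, ← hCC,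
        card_union_add_card_inter, card_product, card_product]
    have hp1 : 3 ≤ (R1 ∩ Q).card * (R1 ∩ S).card := prodz hz1sum hz11 hz12
    have hp2 : 3 ≤ (R2 ∩ Q).card * (R2 ∩ S).card := prodz hz2sum hz21 hz22
    have hs1TS : s1 ∉ TS := by
      rw [hTSdef]
      simp only [mem_inter, not_and]
      intro h; exact absurd h.2 hs1R2
    have hs2TS : s2 ∉ TS := by
      rw [hTSdef]
      simp only [mem_inter, not_and]
      intro h; exact absurd h.1 hs2R1
    by_cases hkl : TQ.card * TS.card ≤ 1
    · -- cross sets nearly disjoint: c ≥ 5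
      have hc5 : 5 ≤ c := by omega
      obtain ⟨i, hi⟩ := sigma_even (E := E) S
      refine ⟨by omega, ?_⟩
      intro heq
      -- c = 5 impossible; c = 6 gives the two-block structure
      have hc56 : c = 5 ∨ c = 6 := by omega
      rcases hc56 with hc | hc
      · exfalso
        -- c = 5 : both crossing edges are (1,3) stars, impossible
        have hTQ1 : TQ ⊆ R1 ∩ Q := by
          rw [hTQdef]; intro x hx; simp only [mem_inter] at hx ⊢; tauto
        have hTQ2 : TQ ⊆ R2 ∩ Q := by
          rw [hTQdef]; intro x hx; simp only [mem_inter] at hx ⊢; tauto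
        have hTS1 : TS ⊆ R1 ∩ S := by
          rw [hTSdef]; intro x hx; simp only [mem_inter] at hx ⊢; tauto
        have hTS2 : TS ⊆ R2 ∩ S := by
          rw [hTSdef]; intro x hx; simp only [mem_inter] at hx ⊢; tauto
        have hSS : (R1 ∩ S) ∩ (R2 ∩ S) = TS := by
          rw [hTSdef]; ext x; simp only [mem_inter]; tauto
        have hm1 : TQ.card * TS.card = 1 := by omega
        have hk1 : TQ.card = 1 := Nat.eq_one_of_mul_eq_one_right hm1
        have hl1 : TS.card = 1 := Nat.eq_one_of_mul_eq_one_left hm1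
        have hz6 : (R1 ∩ Q).card * (R1 ∩ S).card = 3
            ∧ (R2 ∩ Q).card * (R2 ∩ S).card = 3 := by omega
        have hb1 : (R1 ∩ S).card = 3 := by
          have h1 := hz6.1
          have hcases : (R1 ∩ S).card = 1 ∨ (R1 ∩ S).card = 3 := by
            set a := (R1 ∩ Q).card with hadef
            set b := (R1 ∩ S).card with hbdef
            clear_value a b
            have : a ≤ 4 := by omega
            interval_cases a <;> omega
          rcases hcases with h | h
          · exfalso
            have hR1S1 : {s1} = R1 ∩ S := eq_of_subset_of_card_le
              (singleton_subset_iff.mpr (mem_inter.mpr ⟨hs1R1, hs1S⟩)) (by rw [h, card_singleton])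
            obtain ⟨y, hy⟩ := card_eq_one.mp hl1
            have : y ∈ R1 ∩ S := hTS1 (hy ▸ mem_singleton_self y)
            rw [← hR1S1, mem_singleton] at this
            exact hs1TS (this ▸ hy ▸ mem_singleton_self y)
          · exact h
        have hb2 : (R2 ∩ S).card = 3 := by
          have h1 := hz6.2
          have hcases : (R2 ∩ S).card = 1 ∨ (R2 ∩ S).card = 3 := by
            set a := (R2 ∩ Q).card with hadef
            set b := (R2 ∩ S).card with hbdef
            clear_value a b
            have : a ≤ 4 := by omega
            interval_cases a <;> omega
          rcases hcases with h | h
          · exfalso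
            have hR2S1 : {s2} = R2 ∩ S := eq_of_subset_of_card_le
              (singleton_subset_iff.mpr (mem_inter.mpr ⟨hs2R2, hs2S⟩)) (by rw [h, card_singleton])
            obtain ⟨y, hy⟩ := card_eq_one.mp hl1
            have : y ∈ R2 ∩ S := hTS2 (hy ▸ mem_singleton_self y)
            rw [← hR2S1, mem_singleton] at this
            exact hs2TS (this ▸ hy ▸ mem_singleton_self y)
          · exact h
        have huc : ((R1 ∩ S) ∪ (R2 ∩ S)).card + TS.card
            = (R1 ∩ S).card + (R2 ∩ S).card := by
          rw [← hSS, card_union_add_card_inter]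
        have hsubS : (R1 ∩ S) ∪ (R2 ∩ S) ⊆ S :=
          union_subset inter_subset_right inter_subset_right
        have hle := card_le_card hsubS
        rw [hb1, hb2, hl1] at huc
        rw [hS4] at hle
        omega
      · -- c = 6, σ = 6 : all S-degrees are 3, at most two hyperedges meet S
        have hσ6 : σ = 6 := by omega
        have hdeg3 : ∀ v ∈ S, (hyperAdj E).degree v = 3 := by
          intro v hv
          have hrest : 9 ≤ ∑ x ∈ S.erase v, (hyperAdj E).degree x := by
            have := Finset.card_nsmul_le_sum (S.erase v) (fun x => (hyperAdj E).degree x) 3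
              (fun x _ => mindeg hunif hconn x)
            rw [card_erase_of_mem hv, hS4] at this
            simpa using this
          have hsum := Finset.add_sum_erase S (fun x => (hyperAdj E).degree x) hv
          have := mindeg hunif hconn v
          omega
        have hmem_nb : ∀ v : Fin 8, v ∈ insert v ((hyperAdj E).neighborFinset v) :=
          fun v => mem_insert_self v _
        have hRvE : ∀ v ∈ S, insert v ((hyperAdj E).neighborFinset v) ∈ E := by
          intro v hv
          obtain ⟨e, he, hve⟩ := cover hconn v
          have := unique_edge hunif v (hdeg3 v hv) he hve
          rw [← this]
          exact he
        have hadjR : ∀ v ∈ S, ∀ w ∈ S, (hyperAdj E).Adj v w →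
            insert v ((hyperAdj E).neighborFinset v) = insert w ((hyperAdj E).neighborFinset w) := by
          intro v hv w hw hadj
          exact unique_edge hunif w (hdeg3 w hw) (hRvE v hv)
            (mem_insert_of_mem (by rwa [SimpleGraph.mem_neighborFinset]))
        have hclaim : ∀ s ∈ S, insert s ((hyperAdj E).neighborFinset s)
            = insert s1 ((hyperAdj E).neighborFinset s1)
            ∨ insert s ((hyperAdj E).neighborFinset s)
            = insert s2 ((hyperAdj E).neighborFinset s2) := by
          intro s hs
          by_contra h
          push_neg at h
          obtain ⟨hA, hB⟩ := h
          have hss1 : s ≠ s1 := fun h' => hA (by rw [h'])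
          have hss2 : s ≠ s2 := fun h' => hB (by rw [h'])
          have hnadj1 : ¬(hyperAdj E).Adj s s1 := fun had => hA (hadjR s hs s1 hs1S had)
          have hnadj2 : ¬(hyperAdj E).Adj s s2 := fun had => hB (hadjR s hs s2 hs2S had)
          have h3sub : insert s (insert s1 ({s2} : Finset (Fin 8))) ⊆ S :=
            insert_subset hs (insert_subset hs1S (singleton_subset_iff.mpr hs2S))
          have h3card : (insert s (insert s1 ({s2} : Finset (Fin 8)))).card = 3 := by
            rw [card_insert_of_notMem (by simp [hss1, hss2]),
              card_insert_of_notMem (by simp [hs12]), card_singleton]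
          have husd : (S \ insert s (insert s1 ({s2} : Finset (Fin 8)))).card = 1 := by
            rw [card_sdiff_of_subset h3sub, hS4, h3card]
          obtain ⟨d, hd⟩ := card_eq_one.mp husd
          have hdS : d ∈ S := (mem_sdiff.mp (hd ▸ mem_singleton_self d)).1
          have hdn : d ∉ insert s (insert s1 ({s2} : Finset (Fin 8))) :=
            (mem_sdiff.mp (hd ▸ mem_singleton_self d)).2
          have hds : d ≠ s := fun h' => hdn (by rw [h']; exact mem_insert_self _ _)
          have hds1 : d ≠ s1 := fun h' => hdn (by rw [h']; simp)
          have hds2 : d ≠ s2 := fun h' => hdn (by rw [h']; simp)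
          have hSenum : S = insert s (insert s1 (insert s2 ({d} : Finset (Fin 8)))) := by
            apply (eq_of_subset_of_card_le (insert_subset hs (insert_subset hs1S
              (insert_subset hs2S (singleton_subset_iff.mpr hdS)))) ?_).symm
            rw [card_insert_of_notMem (by simp [hss1, hss2, Ne.symm hds]),
              card_insert_of_notMem (by simp [hs12, Ne.symm hds1]),
              card_insert_of_notMem (by simp [Ne.symm hds2]), card_singleton, hS4]
          have hmemS : ∀ v ∈ S, v = s ∨ v = s1 ∨ v = s2 ∨ v = d := by
            intro v hv
            have := hSenum ▸ hv
            simpa [mem_insert] using this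
          have hfs : S.filter ((hyperAdj E).Adj s) ⊆ {d} := by
            intro v hv
            obtain ⟨hvS, hadj⟩ := mem_filter.mp hv
            rcases hmemS v hvS with h | h | h | h
            · rw [h] at hadj; exact absurd rfl hadj.ne
            · rw [h] at hadj; exact absurd hadj hnadj1
            · rw [h] at hadj; exact absurd hadj hnadj2
            · exact mem_singleton.mpr h
          have hfs1 : S.filter ((hyperAdj E).Adj s1) ⊆ {d} := by
            intro v hv
            obtain ⟨hvS, hadj⟩ := mem_filter.mp hv
            rcases hmemS v hvS with h | h | h | h
            · rw [h] at hadj; exact absurd hadj.symm hnadj1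
            · rw [h] at hadj; exact absurd rfl hadj.ne
            · rw [h] at hadj; exact absurd hadj hnadj
            · exact mem_singleton.mpr h
          have hfs2 : S.filter ((hyperAdj E).Adj s2) ⊆ {d} := by
            intro v hv
            obtain ⟨hvS, hadj⟩ := mem_filter.mp hv
            rcases hmemS v hvS with h | h | h | h
            · rw [h] at hadj; exact absurd hadj.symm hnadj2
            · rw [h] at hadj; exact absurd hadj.symm hnadj
            · rw [h] at hadj; exact absurd rfl hadj.ne
            · exact mem_singleton.mpr h
          have hfd : S.filter ((hyperAdj E).Adj d) ⊆ S.erase d := by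
            intro v hv
            obtain ⟨hvS, hadj⟩ := mem_filter.mp hv
            exact mem_erase.mpr ⟨hadj.ne', hvS⟩
          set f : Fin 8 → ℕ := fun v => (S.filter ((hyperAdj E).Adj v)).card with hfdef
          have hf1 : f s ≤ 1 := by
            have := card_le_card hfs; simpa using this
          have hf2 : f s1 ≤ 1 := by
            have := card_le_card hfs1; simpa using this
          have hf3 : f s2 ≤ 1 := by
            have := card_le_card hfs2; simpa using this
          have hf4 : f d ≤ 3 := by
            have := card_le_card hfd
            rw [card_erase_of_mem hdS, hS4] at this
            exact this
          have hσsum : σ = ∑ v ∈ S, f v := by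
            rw [hσdef, cardFilterProd, hfdef]
          have hsum4 : σ = f s + (f s1 + (f s2 + f d)) := by
            rw [hσsum, hSenum, Finset.sum_insert (by simp [hss1, hss2, Ne.symm hds]),
              Finset.sum_insert (by simp [hs12, Ne.symm hds1]),
              Finset.sum_insert (by simp [Ne.symm hds2]), Finset.sum_singleton]
          have hfseq : f s = 1 := by omega
          have hfs1eq : f s1 = 1 := by omega
          have hfilts : S.filter ((hyperAdj E).Adj s) = {d} := by
            apply eq_of_subset_of_card_le hfs
            rw [card_singleton]
            exact le_of_eq hfseq.symm
          have hfilts1 : S.filter ((hyperAdj E).Adj s1) = {d} := by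
            apply eq_of_subset_of_card_le hfs1
            rw [card_singleton]
            exact le_of_eq hfs1eq.symm
          have hadjsd : (hyperAdj E).Adj s d :=
            (mem_filter.mp (hfilts ▸ mem_singleton_self d)).2
          have hadjs1d : (hyperAdj E).Adj s1 d :=
            (mem_filter.mp (hfilts1 ▸ mem_singleton_self d)).2
          have e1 := hadjR s hs d hdS hadjsd
          have e2 := hadjR s1 hs1S d hdS hadjs1d
          exact hA (e1.trans e2.symm)
        refine ⟨Q, insert s1 ((hyperAdj E).neighborFinset s1),
          insert s2 ((hyperAdj E).neighborFinset s2), fun e he => ?_⟩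
        by_cases hes : e ∩ S = ∅
        · exact Or.inl (heQ e he hes)
        · obtain ⟨x, hx⟩ := nonempty_of_ne_empty hes
          obtain ⟨hxe, hxS⟩ := mem_inter.mp hx
          have hex : e = insert x ((hyperAdj E).neighborFinset x) :=
            unique_edge hunif x (hdeg3 x hxS) he hxe
          rcases hclaim x hxS with h | h
          · exact Or.inr (Or.inl (hex.trans h))
          · exact Or.inr (Or.inr (hex.trans h))
    · push_neg at hkl
      have hklcases : (TQ.card = 1 ∧ TS.card = 2) ∨ (TQ.card = 2 ∧ TS.card = 1) := by
        have h3 : TQ.card + TS.card ≤ 3 := hT ▸ hT3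
        set k := TQ.card with hkdef
        set l := TS.card with hldef
        clear_value k l
        have hk3 : k ≤ 3 := by omega
        have hl3 : l ≤ 3 := by omega
        interval_cases k <;> interval_cases l <;> omega
      rcases hklcases with ⟨hk, hl⟩ | ⟨hk, hl⟩
      · -- (1,2) shape
        have hTQ1 : TQ ⊆ R1 ∩ Q := by
          rw [hTQdef]; intro x hx; simp only [mem_inter] at hx ⊢; tauto
        have hTQ2 : TQ ⊆ R2 ∩ Q := by
          rw [hTQdef]; intro x hx; simp only [mem_inter] at hx ⊢; tauto
        have hTS1 : TS ⊆ R1 ∩ S := by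
          rw [hTSdef]; intro x hx; simp only [mem_inter] at hx ⊢; tauto
        have hTS2 : TS ⊆ R2 ∩ S := by
          rw [hTSdef]; intro x hx; simp only [mem_inter] at hx ⊢; tauto
        have hTSS : TS ⊆ S := fun x hx => (mem_inter.mp (hTS1 hx)).2
        have hTSR1 : TS ⊆ R1 := fun x hx => (mem_inter.mp (hTS1 hx)).1
        have hTSR2 : TS ⊆ R2 := fun x hx => (mem_inter.mp (hTS2 hx)).1
        have hins1 : insert s1 TS ⊆ R1 ∩ S := insert_subset (mem_inter.mpr ⟨hs1R1, hs1S⟩) hTS1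
        have hins2 : insert s2 TS ⊆ R2 ∩ S := insert_subset (mem_inter.mpr ⟨hs2R2, hs2S⟩) hTS2
        have hcins1 : (insert s1 TS).card = 3 := by rw [card_insert_of_notMem hs1TS, hl]
        have hcins2 : (insert s2 TS).card = 3 := by rw [card_insert_of_notMem hs2TS, hl]
        have hge1 : 3 ≤ (R1 ∩ S).card := hcins1 ▸ card_le_card hins1
        have hge2 : 3 ≤ (R2 ∩ S).card := hcins2 ▸ card_le_card hins2
        have hR1S : R1 ∩ S = insert s1 TS :=
          (eq_of_subset_of_card_le hins1 (by omega)).symm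
        have hR2S : R2 ∩ S = insert s2 TS :=
          (eq_of_subset_of_card_le hins2 (by omega)).symm
        have hR1Q : R1 ∩ Q = TQ :=
          (eq_of_subset_of_card_le hTQ1 (by omega)).symm
        have hR2Q : R2 ∩ Q = TQ :=
          (eq_of_subset_of_card_le hTQ2 (by omega)).symm
        have hs1i : s1 ∉ insert s2 TS := by
          simp only [mem_insert]
          rintro (rfl | h)
          · exact hs12 rfl
          · exact hs1TS h
        have hSenum : S = insert s1 (insert s2 TS) := by
          apply (eq_of_subset_of_card_le (insert_subset hs1S (insert_subset hs2S hTSS)) ?_).symm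
          rw [card_insert_of_notMem hs1i, card_insert_of_notMem hs2TS, hl, hS4]
        -- σ ≥ 10
        have h1' : (s1, s2) ∈ S.offDiag := hpmem
        have h2' : (s2, s1) ∈ S.offDiag.erase (s1, s2) := by
          rw [mem_erase]
          exact ⟨by simp [Prod.ext_iff]; rintro rfl; exact fun h => hs12 rfl,
            mem_offDiag.mpr ⟨hs2S, hs1S, hs12.symm⟩⟩
        have hadj2 : ∀ u v : Fin 8, u ∈ insert s1 (insert s2 TS) → v ∈ insert s1 (insert s2 TS) →
            u ≠ v → ¬(u = s1 ∧ v = s2) → ¬(u = s2 ∧ v = s1) → (hyperAdj E).Adj u v := by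
          intro u v hu hv huv h12 h21
          simp only [mem_insert] at hu hv
          rcases hu with hu | hu | hu <;> rcases hv with hv | hv | hv
          · exact absurd (hu.trans hv.symm) huv
          · exact absurd ⟨hu, hv⟩ h12
          · exact hu ▸ clique hR1E hs1R1 (hTSR1 hv) (hu ▸ huv)
          · exact absurd ⟨hu, hv⟩ h21
          · exact absurd (hu.trans hv.symm) huv
          · exact hu ▸ clique hR2E hs2R2 (hTSR2 hv) (hu ▸ huv)
          · exact hv ▸ clique hR1E (hTSR1 hu) hs1R1 (hv ▸ huv)
          · exact hv ▸ clique hR2E (hTSR2 hu) hs2R2 (hv ▸ huv)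
          · exact clique hR1E (hTSR1 hu) (hTSR1 hv) huv
        have hσge10 : 10 ≤ σ := by
          have hsub : (S.offDiag.erase (s1, s2)).erase (s2, s1)
              ⊆ (S ×ˢ S).filter fun p => (hyperAdj E).Adj p.1 p.2 := by
            rintro ⟨x, y⟩ hp
            rw [mem_erase] at hp
            obtain ⟨hne21, hp⟩ := hp
            rw [mem_erase] at hp
            obtain ⟨hne12, hpo⟩ := hp
            obtain ⟨hxS, hyS, hxy⟩ := mem_offDiag.mp hpo
            dsimp only at hxS hyS hxy
            rw [mem_filter]
            refine ⟨mem_product.mpr ⟨hxS, hyS⟩, ?_⟩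
            exact hadj2 x y (hSenum ▸ hxS) (hSenum ▸ hyS) hxy
              (fun h => hne12 (by rw [h.1, h.2])) (fun h => hne21 (by rw [h.1, h.2]))
          rw [hσdef]
          calc 10 = ((S.offDiag.erase (s1, s2)).erase (s2, s1)).card := by
                rw [card_erase_of_mem h2', card_erase_of_mem h1', hoffcard]
            _ ≤ _ := card_le_card hsub
        -- c ≥ 4
        have hCup : ((R1 ∩ Q) ×ˢ (R1 ∩ S)) ∪ ((R2 ∩ Q) ×ˢ (R2 ∩ S)) = TQ ×ˢ S := by
          rw [hR1Q, hR1S, hR2Q, hR2S, hSenum, ← product_union]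
          congr 1
          ext v
          simp only [mem_union, mem_insert]
          tauto
        have hTQS : (TQ ×ˢ S).card = 4 := by rw [card_product, hk, hS4]
        have hc4 : 4 ≤ c := by rw [hCup] at hcup; omega
        refine ⟨by omega, ?_⟩
        intro heq
        have hc4' : c = 4 := by omega
        have hX : ((Q ×ˢ S).filter fun p => (hyperAdj E).Adj p.1 p.2) = TQ ×ˢ S := by
          symm
          apply eq_of_subset_of_card_le (hCup ▸ union_subset hC1sub hC2sub)
          rw [hTQS, ← hcdef, hc4']
        obtain ⟨q, hq⟩ := card_eq_one.mp hk
        have hEr1 : S.erase s2 = insert s1 TS := by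
          rw [hSenum]
          ext v
          simp only [mem_erase, mem_insert]
          constructor
          · rintro ⟨hne, rfl | rfl | h⟩
            · exact Or.inl rfl
            · exact absurd rfl hne
            · exact Or.inr h
          · rintro (rfl | h)
            · exact ⟨hs12, Or.inl rfl⟩
            · exact ⟨fun hh => hs2TS (hh ▸ h), Or.inr (Or.inr h)⟩
        have hEr2 : S.erase s1 = insert s2 TS := by
          rw [hSenum]
          ext v
          simp only [mem_erase, mem_insert]
          constructor
          · rintro ⟨hne, rfl | rfl | h⟩
            · exact absurd rfl hne
            · exact Or.inl rfl
            · exact Or.inr h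
          · rintro (rfl | h)
            · exact ⟨hs12.symm, Or.inr (Or.inl rfl)⟩
            · exact ⟨fun hh => hs1TS (hh ▸ h), Or.inr (Or.inr h)⟩
        refine ⟨Q, R1, R2, fun e he => ?_⟩
        by_cases hes : e ∩ S = ∅
        · exact Or.inl (heQ e he hes)
        by_cases heq0 : e ∩ Q = ∅
        · exfalso
          have heS' := heS e he heq0
          subst heS'
          exact hnadj (clique he hs1S hs2S hs12)
        obtain ⟨y0, hy0⟩ := nonempty_of_ne_empty hes
        have heQsub : e ∩ Q ⊆ {q} := by
          intro x hx
          have hxy : (x, y0) ∈ (e ∩ Q) ×ˢ (e ∩ Qᶜ) :=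
            mem_product.mpr ⟨hx, by rw [← hSdef]; exact hy0⟩
          have hmem := cross_sub he hxy
          rw [← hSdef] at hmem
          rw [hX] at hmem
          have := (mem_product.mp hmem).1
          rw [hq] at this
          exact this
        have heQq : e ∩ Q = {q} :=
          eq_of_subset_of_card_le heQsub
            (by rw [card_singleton]; exact card_pos.mpr (nonempty_of_ne_empty heq0))
        have hzsum : (e ∩ Q).card + (e ∩ S).card = 4 := by
          rw [hSdef, (edge_decomp Q).2, hunif e he]
        have hz2e : (e ∩ S).card = 3 := by
          have : (e ∩ Q).card = 1 := by rw [heQq, card_singleton]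
          omega
        have hsd : (S \ (e ∩ S)).card = 1 := by
          rw [card_sdiff_of_subset inter_subset_right, hS4, hz2e]
        obtain ⟨w, hw⟩ := card_eq_one.mp hsd
        have hwS : w ∈ S := (mem_sdiff.mp (hw ▸ mem_singleton_self w)).1
        have hwe : w ∉ e ∩ S := (mem_sdiff.mp (hw ▸ mem_singleton_self w)).2
        have heS3 : e ∩ S = S.erase w := by
          apply eq_of_subset_of_card_le
          · intro v hv
            rw [mem_erase]
            refine ⟨?_, (mem_inter.mp hv).2⟩
            rintro rfl
            exact hwe hv
          · rw [card_erase_of_mem hwS, hS4, hz2e]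
        have hw12 : w = s1 ∨ w = s2 := by
          by_contra h
          push_neg at h
          refine hnadj (clique he ?_ ?_ hs12)
          · have : s1 ∈ S.erase w := mem_erase.mpr ⟨Ne.symm h.1, hs1S⟩
            rw [← heS3] at this
            exact (mem_inter.mp this).1
          · have : s2 ∈ S.erase w := mem_erase.mpr ⟨Ne.symm h.2, hs2S⟩
            rw [← heS3] at this
            exact (mem_inter.mp this).1
        rcases hw12 with rfl | rfl
        · -- w = s1 : e = R2
          right; right
          rw [(edge_decomp (R := e) Q).1, (edge_decomp (R := R2) Q).1, ← hSdef,
            heQq, heS3, hR2Q, hq, hR2S, hEr2]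
        · -- w = s2 : e = R1
          right; left
          rw [(edge_decomp (R := e) Q).1, (edge_decomp (R := R1) Q).1, ← hSdef,
            heQq, heS3, hR1Q, hq, hR1S, hEr1]
      · -- (2,1) shape
        have hTQ1 : TQ ⊆ R1 ∩ Q := by
          rw [hTQdef]; intro x hx; simp only [mem_inter] at hx ⊢; tauto
        have hTQ2 : TQ ⊆ R2 ∩ Q := by
          rw [hTQdef]; intro x hx; simp only [mem_inter] at hx ⊢; tauto
        have hTS1 : TS ⊆ R1 ∩ S := by
          rw [hTSdef]; intro x hx; simp only [mem_inter] at hx ⊢; tauto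
        have hTS2 : TS ⊆ R2 ∩ S := by
          rw [hTSdef]; intro x hx; simp only [mem_inter] at hx ⊢; tauto
        have hTSS : TS ⊆ S := fun x hx => (mem_inter.mp (hTS1 hx)).2
        have hTSR1 : TS ⊆ R1 := fun x hx => (mem_inter.mp (hTS1 hx)).1
        have hTSR2 : TS ⊆ R2 := fun x hx => (mem_inter.mp (hTS2 hx)).1
        have hins1 : insert s1 TS ⊆ R1 ∩ S := insert_subset (mem_inter.mpr ⟨hs1R1, hs1S⟩) hTS1
        have hins2 : insert s2 TS ⊆ R2 ∩ S := insert_subset (mem_inter.mpr ⟨hs2R2, hs2S⟩) hTS2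
        have hcins1 : (insert s1 TS).card = 2 := by rw [card_insert_of_notMem hs1TS, hl]
        have hcins2 : (insert s2 TS).card = 2 := by rw [card_insert_of_notMem hs2TS, hl]
        have hge1 : 2 ≤ (R1 ∩ S).card := hcins1 ▸ card_le_card hins1
        have hge2 : 2 ≤ (R2 ∩ S).card := hcins2 ▸ card_le_card hins2
        have hgq1 : 2 ≤ (R1 ∩ Q).card := hk ▸ card_le_card hTQ1
        have hgq2 : 2 ≤ (R2 ∩ Q).card := hk ▸ card_le_card hTQ2
        have hR1S : R1 ∩ S = insert s1 TS :=
          (eq_of_subset_of_card_le hins1 (by omega)).symm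
        have hR2S : R2 ∩ S = insert s2 TS :=
          (eq_of_subset_of_card_le hins2 (by omega)).symm
        have hR1Q : R1 ∩ Q = TQ :=
          (eq_of_subset_of_card_le hTQ1 (by omega)).symm
        have hR2Q : R2 ∩ Q = TQ :=
          (eq_of_subset_of_card_le hTQ2 (by omega)).symm
        have hs1i : s1 ∉ insert s2 TS := by
          simp only [mem_insert]
          rintro (rfl | h)
          · exact hs12 rfl
          · exact hs1TS h
        have hCup : ((R1 ∩ Q) ×ˢ (R1 ∩ S)) ∪ ((R2 ∩ Q) ×ˢ (R2 ∩ S))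
            = TQ ×ˢ (insert s1 (insert s2 TS)) := by
          rw [hR1Q, hR1S, hR2Q, hR2S, ← product_union]
          congr 1
          ext v
          simp only [mem_union, mem_insert]
          tauto
        have hcupcard : (TQ ×ˢ (insert s1 (insert s2 TS))).card = 6 := by
          rw [card_product, hk, card_insert_of_notMem hs1i, card_insert_of_notMem hs2TS, hl]
        have hc6 : 6 ≤ c := by rw [hCup, hcupcard] at hcup; exact hcup
        refine ⟨by omega, ?_⟩
        intro heq
        exfalso
        have hc6' : c = 6 := by omega
        have hσ6 : σ = 6 := by omega
        have hX : ((Q ×ˢ S).filter fun p => (hyperAdj E).Adj p.1 p.2)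
            = TQ ×ˢ (insert s1 (insert s2 TS)) := by
          symm
          apply eq_of_subset_of_card_le (hCup ▸ union_subset hC1sub hC2sub)
          rw [hcupcard, ← hcdef, hc6']
        obtain ⟨t, ht⟩ := card_eq_one.mp hl
        have htTS : t ∈ TS := ht ▸ mem_singleton_self t
        have htS : t ∈ S := hTSS htTS
        have htR1 : t ∈ R1 := hTSR1 htTS
        have htR2 : t ∈ R2 := hTSR2 htTS
        have hs1t : s1 ≠ t := fun h => hs1TS (h ▸ htTS)
        have hs2t : s2 ≠ t := fun h => hs2TS (h ▸ htTS)
        have h3sub : insert s1 (insert s2 ({t} : Finset (Fin 8))) ⊆ S :=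
          insert_subset hs1S (insert_subset hs2S (singleton_subset_iff.mpr htS))
        have h3card : (insert s1 (insert s2 ({t} : Finset (Fin 8)))).card = 3 := by
          rw [card_insert_of_notMem (by simp [hs12, hs1t]),
            card_insert_of_notMem (by simp [hs2t]), card_singleton]
        have husd : (S \ insert s1 (insert s2 ({t} : Finset (Fin 8)))).card = 1 := by
          rw [card_sdiff_of_subset h3sub, hS4, h3card]
        obtain ⟨u, hu⟩ := card_eq_one.mp husd
        have huS : u ∈ S := (mem_sdiff.mp (hu ▸ mem_singleton_self u)).1
        have hun : u ∉ insert s1 (insert s2 ({t} : Finset (Fin 8))) := (mem_sdiff.mp (hu ▸ mem_singleton_self u)).2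
        have hus1 : u ≠ s1 := fun h => hun (by rw [h]; exact mem_insert_self _ _)
        have hus2 : u ≠ s2 := fun h => hun (by rw [h]; simp)
        have hut : u ≠ t := fun h => hun (by rw [h]; simp)
        have hSenum : S = insert s1 (insert s2 (insert t ({u} : Finset (Fin 8)))) := by
          apply (eq_of_subset_of_card_le (insert_subset hs1S (insert_subset hs2S
            (insert_subset htS (singleton_subset_iff.mpr huS)))) ?_).symm
          rw [card_insert_of_notMem (by simp [hs12, hs1t, Ne.symm hus1]),
            card_insert_of_notMem (by simp [hs2t, Ne.symm hus2]),
            card_insert_of_notMem (by simp [Ne.symm hut]), card_singleton, hS4]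
        -- u has no neighbours in Q
        have hQu : Q.filter ((hyperAdj E).Adj u) = ∅ := by
          rw [filter_eq_empty_iff]
          intro x hx hadj
          have hmem : (x, u) ∈ (Q ×ˢ S).filter fun p => (hyperAdj E).Adj p.1 p.2 :=
            mem_filter.mpr ⟨mem_product.mpr ⟨hx, huS⟩, hadj.symm⟩
          rw [hX] at hmem
          have := (mem_product.mp hmem).2
          simp only [mem_insert] at this
          rcases this with rfl | rfl | h
          · exact hus1 rfl
          · exact hus2 rfl
          · exact hut (by rw [ht] at h; exact mem_singleton.mp h)
        have hdu : 3 ≤ (S.filter ((hyperAdj E).Adj u)).card := by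
          have h1 := degree_split (E := E) Q u
          have h2 := mindeg hunif hconn u
          rw [hQu, card_empty, ← hSdef] at h1
          omega
        have hds1 : 1 ≤ (S.filter ((hyperAdj E).Adj s1)).card :=
          card_pos.mpr ⟨t, mem_filter.mpr ⟨htS, clique hR1E hs1R1 htR1 hs1t⟩⟩
        have hds2 : 1 ≤ (S.filter ((hyperAdj E).Adj s2)).card :=
          card_pos.mpr ⟨t, mem_filter.mpr ⟨htS, clique hR2E hs2R2 htR2 hs2t⟩⟩
        have hdt : 2 ≤ (S.filter ((hyperAdj E).Adj t)).card := by
          have hsub2 : insert s1 {s2} ⊆ S.filter ((hyperAdj E).Adj t) := by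
            refine insert_subset (mem_filter.mpr ⟨hs1S, (clique hR1E hs1R1 htR1 hs1t).symm⟩) ?_
            exact singleton_subset_iff.mpr
              (mem_filter.mpr ⟨hs2S, (clique hR2E hs2R2 htR2 hs2t).symm⟩)
          calc 2 = (insert s1 ({s2} : Finset (Fin 8))).card := by
                rw [card_insert_of_notMem (by simp [hs12]), card_singleton]
            _ ≤ _ := card_le_card hsub2
        set f : Fin 8 → ℕ := fun v => (S.filter ((hyperAdj E).Adj v)).card with hfdef
        have hf1 : 1 ≤ f s1 := hds1
        have hf2 : 1 ≤ f s2 := hds2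
        have hf3 : 2 ≤ f t := hdt
        have hf4 : 3 ≤ f u := hdu
        have hσsum : σ = ∑ v ∈ S, f v := by
          rw [hσdef, cardFilterProd, hfdef]
        clear_value f
        rw [hSenum, Finset.sum_insert (by simp [hs12, hs1t, Ne.symm hus1]),
          Finset.sum_insert (by simp [hs2t, Ne.symm hus2]),
          Finset.sum_insert (by simp [Ne.symm hut]), Finset.sum_singleton] at hσsum
        omega


lemma cardE_ge3 (hunif : ∀ e ∈ E, e.card = 4) (hconn : (hyperAdj E).Connected) :
    3 ≤ E.card := by
  by_contra h
  push_neg at h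
  obtain ⟨e1, he1, -⟩ := cover hconn 0
  by_cases h2 : ∃ e ∈ E, e ≠ e1
  · obtain ⟨e2, he2, hne⟩ := h2
    have h12 : ({e1, e2} : Finset (Finset (Fin 8))).card = 2 := by
      rw [card_insert_of_notMem (by simpa using hne.symm), card_singleton]
    have hEeq : ({e1, e2} : Finset (Finset (Fin 8))) = E :=
      eq_of_subset_of_card_le (insert_subset he1 (singleton_subset_iff.mpr he2)) (by omega)
    have hcov : ∀ v : Fin 8, v ∈ e1 ∪ e2 := by
      intro v
      obtain ⟨e, he, hv⟩ := cover hconn v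
      rw [← hEeq] at he
      rcases mem_insert.mp he with rfl | he
      · exact mem_union_left _ hv
      · rw [mem_singleton] at he
        subst he
        exact mem_union_right _ hv
    have huniv : e1 ∪ e2 = univ := eq_univ_iff_forall.mpr hcov
    have hcard8 : (e1 ∪ e2).card = 8 := by rw [huniv]; simp
    have hinter : (e1 ∩ e2).card = 0 := by
      have := card_union_add_card_inter e1 e2
      rw [hcard8, hunif e1 he1, hunif e2 he2] at this
      omega
    have hint : e1 ∩ e2 = ∅ := card_eq_zero.mp hinter
    have he2ne : e2.Nonempty := card_pos.mp (by rw [hunif e2 he2]; omega)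
    obtain ⟨v2, hv2⟩ := he2ne
    have hv2e1 : v2 ∉ e1 := by
      intro hv
      have : v2 ∈ e1 ∩ e2 := mem_inter.mpr ⟨hv, hv2⟩
      rw [hint] at this
      exact notMem_empty _ this
    obtain ⟨x, y, hx, hy, hadj⟩ := cross_edge hconn e1
      (card_pos.mp (by rw [hunif e1 he1]; omega)) ⟨v2, hv2e1⟩
    obtain ⟨-, e, he, hxe, hye⟩ := hadj
    rw [← hEeq] at he
    rcases mem_insert.mp he with rfl | he
    · exact hy hye
    · rw [mem_singleton] at he
      subst he
      have : x ∈ e1 ∩ e := mem_inter.mpr ⟨hx, hxe⟩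
      rw [hint] at this
      exact notMem_empty _ this
  · push_neg at h2
    have hall : ∀ v : Fin 8, v ∈ e1 := by
      intro v
      obtain ⟨e, he, hv⟩ := cover hconn v
      rwa [h2 e he] at hv
    have : (univ : Finset (Fin 8)).card ≤ e1.card := card_le_card fun v _ => hall v
    rw [hunif e1 he1] at this
    simp at this

end Hyper15

theorem adjacent_pairs_ge_fifteen (E : Finset (Finset (Fin 8)))
    (hunif : ∀ e ∈ E, e.card = 4)
    (hconn : (hyperAdj E).Connected) :
    15 ≤ nPairs E 1 ∧ (nPairs E 1 = 15 → E.card = 3) := by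
  rw [Hyper15.nPairs_eq E]
  obtain ⟨Q, hQE, -⟩ := Hyper15.cover hconn 0
  have hhs := Hyper15.handshake hQE (hunif Q hQE)
  obtain ⟨hbound, hstruct⟩ := Hyper15.analysis hunif hconn hQE
  constructor
  · omega
  · intro h15
    obtain ⟨A, B, C, hABC⟩ := hstruct (by omega)
    have hsub : E ⊆ {A, B, C} := by
      intro e he
      rcases hABC e he with rfl | rfl | rfl
      · exact Finset.mem_insert_self _ _
      · exact Finset.mem_insert_of_mem (Finset.mem_insert_self _ _)
      · exact Finset.mem_insert_of_mem (Finset.mem_insert_of_mem (Finset.mem_singleton_self _))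
    have hle : E.card ≤ 3 := by
      have h1 := Finset.card_le_card hsub
      have h2 := Finset.card_insert_le A ({B, C} : Finset (Finset (Fin 8)))
      have h3 := Finset.card_insert_le B ({C} : Finset (Finset (Fin 8)))
      have h4 : ({C} : Finset (Finset (Fin 8))).card = 1 := Finset.card_singleton _
      omega
    have hge := Hyper15.cardE_ge3 hunif hconn
    omega
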